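/- arXiv:1006.1413 — 4 statements merged into one kernel-verified Lean document; each statement's English description precedes it below -/
import Mathlib

section
/- For all types τ1 and τ2, if τ1 ≤ τ2 holds, then ⟦τ1⟧ ⊆ ⟦τ2⟧, i.e., every value v with v ∈ τ1 also satisfies v ∈ τ2. -/
/-! ## Possibly infinite types and values, coinductively defined as M-types -/

/-- Shapes of type constructors: `int`, object types (class name plus finite
set of field names), and binary union. -/
inductive TyShape : Type where
  | int : TyShape
  | obj : String → Finset String → TyShape
  | union : TyShape

/-- Children (immediate subterms) of each shape. -/
def TyChild : TyShape → Type
  | .int => Empty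
  | .obj _ fs => {f : String // f ∈ fs}
  | .union => Bool

/-- The polynomial functor whose final coalgebra is the set of types. -/
def TyP : PFunctor := ⟨TyShape, TyChild⟩

/-- Possibly infinite types, coinductively generated by
`τ ::= int | obj C [f₁:τ₁,…,fₙ:τₙ] | τ₁ ∨ τ₂`. -/
def Ty : Type := TyP.M

/-- The type `int`. -/
def Ty.int : Ty := PFunctor.M.mk ⟨TyShape.int, Empty.elim⟩

/-- The union type `τ₁ ∨ τ₂`. -/
def Ty.union (t1 t2 : Ty) : Ty :=
  PFunctor.M.mk ⟨TyShape.union, fun b => cond b t1 t2⟩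

/-- The object type `obj C [f:τ_f  |  f ∈ fs]`. -/
def Ty.obj (c : String) (fs : Finset String) (ch : {f : String // f ∈ fs} → Ty) : Ty :=
  PFunctor.M.mk ⟨TyShape.obj c fs, ch⟩

/-- Object type with no fields. -/
def Ty.obj0 (c : String) : Ty :=
  Ty.obj c ∅ (fun f => absurd f.2 (Finset.notMem_empty f.1))

/-- Object type with a single field. -/
def Ty.obj1 (c f : String) (t : Ty) : Ty :=
  Ty.obj c {f} (fun _ => t)

/-- Object type with two (distinct) fields. -/
def Ty.obj2 (c f1 f2 : String) (t1 t2 : Ty) : Ty :=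
  Ty.obj c {f1, f2} (fun g => if g.1 = f1 then t1 else t2)

/-- Shapes of values: integers and objects. -/
inductive ValShape : Type where
  | int : ℤ → ValShape
  | obj : String → Finset String → ValShape

/-- Children of each value shape. -/
def ValChild : ValShape → Type
  | .int _ => Empty
  | .obj _ fs => {f : String // f ∈ fs}

/-- The polynomial functor whose final coalgebra is the set of values. -/
def ValP : PFunctor := ⟨ValShape, ValChild⟩

/-- Possibly infinite values, coinductively generated by
`v ::= i | obj C [f₁↦v₁,…,fₙ↦vₙ]`. -/
def Val : Type := ValP.M

/-- The integer value `i`. -/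
def Val.int (i : ℤ) : Val := PFunctor.M.mk ⟨ValShape.int i, Empty.elim⟩

/-- The object value `obj C [f ↦ v_f | f ∈ fs]`. -/
def Val.obj (c : String) (fs : Finset String) (ch : {f : String // f ∈ fs} → Val) : Val :=
  PFunctor.M.mk ⟨ValShape.obj c fs, ch⟩

/-- Object value with a single field. -/
def Val.obj1 (c f : String) (v : Val) : Val :=
  Val.obj c {f} (fun _ => v)

/-! ## Subtyping

A contractive derivation is a possibly infinite derivation with no
sub-derivation built only with rules (∨R1) and (∨R2); equivalently, the
premises of (∨R1) and (∨R2) are interpreted inductively (within a layer),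
while the premises of all other rules are interpreted coinductively (they
refer to the greatest fixed point `Subty`). -/

/-- One inductive layer of the subtyping rules: premises of (∨R1)/(∨R2) are
inductive occurrences (so only finitely many consecutive applications of
these rules are possible, i.e. derivations are contractive), premises of all
other rules are occurrences of the coinductively-interpreted relation `R`. -/
inductive SubStep (R : Ty → Ty → Prop) : Ty → Ty → Prop where
  | int : SubStep R Ty.int Ty.int
  | unionR1 {t t1 t2 : Ty} : SubStep R t t1 → SubStep R t (Ty.union t1 t2)
  | unionR2 {t t1 t2 : Ty} : SubStep R t t2 → SubStep R t (Ty.union t1 t2)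
  | unionL {t1 t2 t : Ty} : R t1 t → R t2 t → SubStep R (Ty.union t1 t2) t
  | obj {c : String} {fs fs' : Finset String} (hsub : fs' ⊆ fs)
      {ch : {f : String // f ∈ fs} → Ty} {ch' : {f : String // f ∈ fs'} → Ty} :
      (∀ (f : String) (h : f ∈ fs'), R (ch ⟨f, hsub h⟩) (ch' ⟨f, h⟩)) →
      SubStep R (Ty.obj c fs ch) (Ty.obj c fs' ch')
  | distr {c : String} {fs : Finset String} {ch : {f : String // f ∈ fs} → Ty}
      {f : String} (hf : f ∈ fs) {s1 s2 t : Ty} :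
      ch ⟨f, hf⟩ = Ty.union s1 s2 →
      R (Ty.obj c fs (fun g => if g.1 = f then s1 else ch g)) t →
      R (Ty.obj c fs (fun g => if g.1 = f then s2 else ch g)) t →
      SubStep R (Ty.obj c fs ch) t

/-- The subtyping relation `τ ≤ τ′`: greatest fixed point of `SubStep`,
i.e. existence of a contractive, possibly infinite derivation. -/
def Subty (t1 t2 : Ty) : Prop :=
  ∃ R : Ty → Ty → Prop, (∀ x y, R x y → SubStep R x y) ∧ R t1 t2

/-! ## Membership of values in types -/

/-- One inductive layer of the membership rules: premises of (∨L)/(∨R) are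
inductive (contractiveness), premises of (obj) are coinductive. -/
inductive MemStep (R : Val → Ty → Prop) : Val → Ty → Prop where
  | int (i : ℤ) : MemStep R (Val.int i) Ty.int
  | unionL {v : Val} {t1 t2 : Ty} : MemStep R v t1 → MemStep R v (Ty.union t1 t2)
  | unionR {v : Val} {t1 t2 : Ty} : MemStep R v t2 → MemStep R v (Ty.union t1 t2)
  | obj {c : String} {gs fs : Finset String} (hsub : fs ⊆ gs)
      {vch : {f : String // f ∈ gs} → Val} {ch : {f : String // f ∈ fs} → Ty} :
      (∀ (f : String) (h : f ∈ fs), R (vch ⟨f, hsub h⟩) (ch ⟨f, h⟩)) →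
      MemStep R (Val.obj c gs vch) (Ty.obj c fs ch)

/-- The membership relation `v ∈ τ`: greatest fixed point of `MemStep`,
i.e. existence of a contractive, possibly infinite derivation. -/
def MemVal (v : Val) (t : Ty) : Prop :=
  ∃ R : Val → Ty → Prop, (∀ w s, R w s → MemStep R w s) ∧ R v t

/-! ## The non-emptiness predicate `↑τ` -/

/-- One inductive layer of the non-emptiness rules: premises of (↑∨L)/(↑∨R)
are inductive (contractiveness), premises of (↑obj) are coinductive. -/
inductive NEStep (R : Ty → Prop) : Ty → Prop where
  | int : NEStep R Ty.int
  | unionL {t1 t2 : Ty} : NEStep R t1 → NEStep R (Ty.union t1 t2)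
  | unionR {t1 t2 : Ty} : NEStep R t2 → NEStep R (Ty.union t1 t2)
  | obj {c : String} {fs : Finset String} {ch : {f : String // f ∈ fs} → Ty} :
      (∀ (f : String) (h : f ∈ fs), R (ch ⟨f, h⟩)) →
      NEStep R (Ty.obj c fs ch)

/-- The non-emptiness predicate `↑τ`: greatest fixed point of `NEStep`. -/
def NotEmpty (t : Ty) : Prop :=
  ∃ R : Ty → Prop, (∀ s, R s → NEStep R s) ∧ R t


/-! ## Auxiliary development for soundness -/

private lemma tyMkInj {a b : TyP.Obj Ty} (h : (PFunctor.M.mk a : Ty) = PFunctor.M.mk b) :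
    a = b := by
  have := congrArg PFunctor.M.dest h
  exact (PFunctor.M.dest_mk a).symm.trans (this.trans (PFunctor.M.dest_mk b))

private lemma valMkInj {a b : ValP.Obj Val} (h : (PFunctor.M.mk a : Val) = PFunctor.M.mk b) :
    a = b := by
  have := congrArg PFunctor.M.dest h
  exact (PFunctor.M.dest_mk a).symm.trans (this.trans (PFunctor.M.dest_mk b))

private lemma Ty.union_inj {t1 t2 s1 s2 : Ty} (h : Ty.union t1 t2 = Ty.union s1 s2) :
    t1 = s1 ∧ t2 = s2 := by
  have h' := tyMkInj h
  have h2 := Sigma.mk.inj_iff.mp h'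
  have hf : (fun b => cond b t1 t2) = (fun b => cond b s1 s2) := eq_of_heq h2.2
  exact ⟨congrFun hf true, congrFun hf false⟩

private lemma Ty.int_ne_union {t1 t2 : Ty} (h : Ty.int = Ty.union t1 t2) : False := by
  have h' := tyMkInj h
  exact TyShape.noConfusion (congrArg Sigma.fst h')

private lemma Ty.int_ne_obj {c fs ch} (h : Ty.int = Ty.obj c fs ch) : False := by
  have h' := tyMkInj h
  exact TyShape.noConfusion (congrArg Sigma.fst h')

private lemma Ty.union_ne_obj {t1 t2 : Ty} {c fs ch} (h : Ty.union t1 t2 = Ty.obj c fs ch) :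
    False := by
  have h' := tyMkInj h
  exact TyShape.noConfusion (congrArg Sigma.fst h')

private lemma Ty.obj_inj {c c' : String} {fs fs' : Finset String}
    {ch : {f : String // f ∈ fs} → Ty} {ch' : {f : String // f ∈ fs'} → Ty}
    (h : Ty.obj c fs ch = Ty.obj c' fs' ch') :
    c = c' ∧ ∃ hfs : fs = fs', HEq ch ch' := by
  have h' := tyMkInj h
  have h2 := Sigma.mk.inj_iff.mp h'
  obtain ⟨hc, hfs⟩ : c = c' ∧ fs = fs' := by
    cases h2.1; exact ⟨rfl, rfl⟩
  exact ⟨hc, hfs, h2.2⟩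

private lemma Val.obj_inj {c c' : String} {fs fs' : Finset String}
    {ch : {f : String // f ∈ fs} → Val} {ch' : {f : String // f ∈ fs'} → Val}
    (h : Val.obj c fs ch = Val.obj c' fs' ch') :
    c = c' ∧ ∃ hfs : fs = fs', HEq ch ch' := by
  have h' := valMkInj h
  have h2 := Sigma.mk.inj_iff.mp h'
  obtain ⟨hc, hfs⟩ : c = c' ∧ fs = fs' := by
    cases h2.1; exact ⟨rfl, rfl⟩
  exact ⟨hc, hfs, h2.2⟩

private lemma memStep_mono {R R' : Val → Ty → Prop} (h : ∀ v t, R v t → R' v t)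
    {v t} (hm : MemStep R v t) : MemStep R' v t := by
  induction hm with
  | int i => exact .int i
  | unionL _ ih => exact .unionL ih
  | unionR _ ih => exact .unionR ih
  | obj hsub hf => exact .obj hsub fun f hh => h _ _ (hf f hh)

private lemma subStep_mono {R R' : Ty → Ty → Prop} (h : ∀ s t, R s t → R' s t)
    {s t} (hm : SubStep R s t) : SubStep R' s t := by
  induction hm with
  | int => exact .int
  | unionR1 _ ih => exact .unionR1 ih
  | unionR2 _ ih => exact .unionR2 ih
  | unionL h1 h2 => exact .unionL (h _ _ h1) (h _ _ h2)
  | obj hsub hf => exact .obj hsub fun f hh => h _ _ (hf f hh)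
  | distr hf heq h1 h2 => exact .distr hf heq (h _ _ h1) (h _ _ h2)

private lemma mem_unfold {v t} (h : MemVal v t) : MemStep MemVal v t := by
  obtain ⟨R, hR, hvt⟩ := h
  exact memStep_mono (fun w s hw => ⟨R, hR, hw⟩) (hR _ _ hvt)

private lemma mem_fold {v t} (h : MemStep MemVal v t) : MemVal v t := by
  refine ⟨fun w s => MemVal w s ∨ MemStep MemVal w s, ?_, Or.inr h⟩
  rintro w s (h' | h')
  · exact memStep_mono (fun _ _ => Or.inl) (mem_unfold h')
  · exact memStep_mono (fun _ _ => Or.inl) h'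

private lemma sub_unfold {s t} (h : Subty s t) : SubStep Subty s t := by
  obtain ⟨R, hR, hst⟩ := h
  exact subStep_mono (fun x y hx => ⟨R, hR, hx⟩) (hR _ _ hst)

/-- Membership layer with the top union prefix bounded by `n`. -/
private inductive MemN0 : ℕ → Val → Ty → Prop where
  | int (n : ℕ) (i : ℤ) : MemN0 n (Val.int i) Ty.int
  | unionL {n v t1 t2} : MemN0 n v t1 → MemN0 (n + 1) v (Ty.union t1 t2)
  | unionR {n v t1 t2} : MemN0 n v t2 → MemN0 (n + 1) v (Ty.union t1 t2)
  | obj (n : ℕ) {c : String} {gs fs : Finset String} (hsub : fs ⊆ gs)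
      {vch : {f : String // f ∈ gs} → Val} {ch : {f : String // f ∈ fs} → Ty} :
      (∀ (f : String) (h : f ∈ fs), MemVal (vch ⟨f, hsub h⟩) (ch ⟨f, h⟩)) →
      MemN0 n (Val.obj c gs vch) (Ty.obj c fs ch)

/-- Membership layer where the top union prefix plus (at objects) the sum of the
field union prefixes is bounded by `n`. -/
private inductive MemB : ℕ → Val → Ty → Prop where
  | int (n : ℕ) (i : ℤ) : MemB n (Val.int i) Ty.int
  | unionL {n v t1 t2} : MemB n v t1 → MemB (n + 1) v (Ty.union t1 t2)
  | unionR {n v t1 t2} : MemB n v t2 → MemB (n + 1) v (Ty.union t1 t2)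
  | obj {n : ℕ} {c : String} {gs fs : Finset String} (hsub : fs ⊆ gs)
      {vch : {f : String // f ∈ gs} → Val} {ch : {f : String // f ∈ fs} → Ty}
      (hmv : ∀ (f : String) (h : f ∈ fs), MemVal (vch ⟨f, hsub h⟩) (ch ⟨f, h⟩))
      (k : {f : String // f ∈ fs} → ℕ)
      (hk : ∀ (f : String) (h : f ∈ fs), MemN0 (k ⟨f, h⟩) (vch ⟨f, hsub h⟩) (ch ⟨f, h⟩))
      (hsum : ∑ f ∈ fs.attach, k f ≤ n) :
      MemB n (Val.obj c gs vch) (Ty.obj c fs ch)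

/-- Subtyping layer with the union prefix (of rules ∨R1/∨R2) bounded by `m`. -/
private inductive SubN : ℕ → Ty → Ty → Prop where
  | int (m : ℕ) : SubN m Ty.int Ty.int
  | unionR1 {m t t1 t2} : SubN m t t1 → SubN (m + 1) t (Ty.union t1 t2)
  | unionR2 {m t t1 t2} : SubN m t t2 → SubN (m + 1) t (Ty.union t1 t2)
  | unionL (m : ℕ) {t1 t2 t} : Subty t1 t → Subty t2 t → SubN m (Ty.union t1 t2) t
  | obj (m : ℕ) {c : String} {fs fs' : Finset String} (hsub : fs' ⊆ fs)
      {ch : {f : String // f ∈ fs} → Ty} {ch' : {f : String // f ∈ fs'} → Ty} :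
      (∀ (f : String) (h : f ∈ fs'), Subty (ch ⟨f, hsub h⟩) (ch' ⟨f, h⟩)) →
      SubN m (Ty.obj c fs ch) (Ty.obj c fs' ch')
  | distr (m : ℕ) {c : String} {fs : Finset String} {ch : {f : String // f ∈ fs} → Ty}
      {f : String} (hf : f ∈ fs) {s1 s2 t : Ty} :
      ch ⟨f, hf⟩ = Ty.union s1 s2 →
      Subty (Ty.obj c fs (fun g => if g.1 = f then s1 else ch g)) t →
      Subty (Ty.obj c fs (fun g => if g.1 = f then s2 else ch g)) t →
      SubN m (Ty.obj c fs ch) t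

private lemma memN0_of {v t} (h : MemStep MemVal v t) : ∃ n, MemN0 n v t := by
  induction h with
  | int i => exact ⟨0, .int 0 i⟩
  | unionL _ ih => obtain ⟨n, hn⟩ := ih; exact ⟨n + 1, .unionL hn⟩
  | unionR _ ih => obtain ⟨n, hn⟩ := ih; exact ⟨n + 1, .unionR hn⟩
  | obj hsub hf => exact ⟨0, .obj 0 hsub hf⟩

private lemma memB_of {v t} (h : MemStep MemVal v t) : ∃ n, MemB n v t := by
  induction h with
  | int i => exact ⟨0, .int 0 i⟩
  | unionL _ ih => obtain ⟨n, hn⟩ := ih; exact ⟨n + 1, .unionL hn⟩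
  | unionR _ ih => obtain ⟨n, hn⟩ := ih; exact ⟨n + 1, .unionR hn⟩
  | @obj c gs fs hsub vch ch hf =>
    have hex : ∀ g : {f : String // f ∈ fs}, ∃ n, MemN0 n (vch ⟨g.1, hsub g.2⟩) (ch g) := by
      intro g
      exact memN0_of (mem_unfold (hf g.1 g.2))
    choose k hk using hex
    refine ⟨∑ f ∈ fs.attach, k f, .obj hsub hf k ?_ le_rfl⟩
    intro f h
    exact hk ⟨f, h⟩

private lemma subN_of {s t} (h : SubStep Subty s t) : ∃ m, SubN m s t := by
  induction h with
  | int => exact ⟨0, .int 0⟩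
  | unionR1 _ ih => obtain ⟨m, hm⟩ := ih; exact ⟨m + 1, .unionR1 hm⟩
  | unionR2 _ ih => obtain ⟨m, hm⟩ := ih; exact ⟨m + 1, .unionR2 hm⟩
  | unionL h1 h2 => exact ⟨0, .unionL 0 h1 h2⟩
  | obj hsub hf => exact ⟨0, .obj 0 hsub hf⟩
  | distr hf heq h1 h2 => exact ⟨0, .distr 0 hf heq h1 h2⟩

private lemma memN0_step {n v t} (h : MemN0 n v t) : MemStep MemVal v t := by
  induction h with
  | int n i => exact .int i
  | unionL _ ih => exact .unionL ih
  | unionR _ ih => exact .unionR ih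
  | obj n hsub hf => exact .obj hsub hf

private lemma memN0_memVal {n v t} (h : MemN0 n v t) : MemVal v t :=
  mem_fold (memN0_step h)


private lemma memB_int_inv {n : ℕ} {v : Val} (hm : MemB n v Ty.int) :
    ∃ i, v = Val.int i := by
  generalize hT : Ty.int = T at hm
  cases hm with
  | int _ i => exact ⟨i, rfl⟩
  | unionL _ => exact absurd hT Ty.int_ne_union
  | unionR _ => exact absurd hT Ty.int_ne_union
  | obj _ _ _ _ _ => exact absurd hT Ty.int_ne_obj

private lemma memB_union_inv {n : ℕ} {v : Val} {t1 t2 : Ty}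
    (hm : MemB n v (Ty.union t1 t2)) :
    ∃ n', n = n' + 1 ∧ (MemB n' v t1 ∨ MemB n' v t2) := by
  generalize hT : Ty.union t1 t2 = T at hm
  cases hm with
  | int _ i => exact absurd hT.symm Ty.int_ne_union
  | unionL hb =>
    obtain ⟨h1, h2⟩ := Ty.union_inj hT
    subst h1; subst h2
    exact ⟨_, rfl, Or.inl hb⟩
  | unionR hb =>
    obtain ⟨h1, h2⟩ := Ty.union_inj hT
    subst h1; subst h2
    exact ⟨_, rfl, Or.inr hb⟩
  | obj _ _ _ _ _ => exact absurd hT Ty.union_ne_obj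

private lemma memB_obj_inv {n : ℕ} {v : Val} {c : String} {fs : Finset String}
    {ch : {f : String // f ∈ fs} → Ty} (hm : MemB n v (Ty.obj c fs ch)) :
    ∃ (gs : Finset String) (hsub : fs ⊆ gs) (vch : {f : String // f ∈ gs} → Val)
      (k : {f : String // f ∈ fs} → ℕ),
      v = Val.obj c gs vch ∧
      (∀ (f : String) (h : f ∈ fs), MemVal (vch ⟨f, hsub h⟩) (ch ⟨f, h⟩)) ∧
      (∀ (f : String) (h : f ∈ fs), MemN0 (k ⟨f, h⟩) (vch ⟨f, hsub h⟩) (ch ⟨f, h⟩)) ∧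
      ∑ f ∈ fs.attach, k f ≤ n := by
  generalize hT : Ty.obj c fs ch = T at hm
  cases hm with
  | int _ i => exact absurd hT.symm Ty.int_ne_obj
  | unionL _ => exact absurd hT.symm Ty.union_ne_obj
  | unionR _ => exact absurd hT.symm Ty.union_ne_obj
  | obj hsub hmv k hk hsum =>
    obtain ⟨hc, hfs, hch⟩ := Ty.obj_inj hT
    subst hc; subst hfs
    have hch' := eq_of_heq hch
    subst hch'
    exact ⟨_, hsub, _, k, rfl, hmv, hk, hsum⟩

private lemma memN0_union_inv {n : ℕ} {v : Val} {t1 t2 : Ty}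
    (hm : MemN0 n v (Ty.union t1 t2)) :
    ∃ n', n = n' + 1 ∧ (MemN0 n' v t1 ∨ MemN0 n' v t2) := by
  generalize hT : Ty.union t1 t2 = T at hm
  cases hm with
  | int _ i => exact absurd hT.symm Ty.int_ne_union
  | unionL hb =>
    obtain ⟨h1, h2⟩ := Ty.union_inj hT
    subst h1; subst h2
    exact ⟨_, rfl, Or.inl hb⟩
  | unionR hb =>
    obtain ⟨h1, h2⟩ := Ty.union_inj hT
    subst h1; subst h2
    exact ⟨_, rfl, Or.inr hb⟩
  | obj _ _ _ => exact absurd hT Ty.union_ne_obj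

/-- The simulation relation used for the coinductive argument. -/
private def SM (w : Val) (u : Ty) : Prop := ∃ x, MemVal w x ∧ Subty x u

private lemma key : ∀ n : ℕ, ∀ {m : ℕ} {s t : Ty} {v : Val},
    SubN m s t → MemB n v s → MemStep SM v t := by
  intro n
  induction n using Nat.strong_induction_on with
  | _ n IH =>
  intro m s t v hst
  induction hst with
  | int m =>
    intro hm
    obtain ⟨i, rfl⟩ := memB_int_inv hm
    exact .int i
  | unionR1 _ ih =>
    intro hm
    exact .unionL (ih hm)
  | unionR2 _ ih =>
    intro hm
    exact .unionR (ih hm)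
  | unionL m h1 h2 =>
    intro hm
    obtain ⟨n', rfl, hc⟩ := memB_union_inv hm
    cases hc with
    | inl hb =>
      obtain ⟨m1, hS1⟩ := subN_of (sub_unfold h1)
      exact IH n' (Nat.lt_succ_self n') hS1 hb
    | inr hb =>
      obtain ⟨m2, hS2⟩ := subN_of (sub_unfold h2)
      exact IH n' (Nat.lt_succ_self n') hS2 hb
  | obj m hsub' hS =>
    intro hm
    obtain ⟨gs, hsub, vch, k, rfl, hmv, hk, hsum⟩ := memB_obj_inv hm
    exact .obj (hsub'.trans hsub)
      (fun f h => ⟨_, hmv f (hsub' h), hS f h⟩)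
  | @distr m c fs ch f hf s1 s2 t heq h1 h2 =>
    intro hm
    obtain ⟨gs, hsub, vch, k, rfl, hmv, hk, hsum⟩ := memB_obj_inv hm
    have hkf := hk f hf
    rw [heq] at hkf
    obtain ⟨m', hkeq, hc⟩ := memN0_union_inv hkf
    have hfa : (⟨f, hf⟩ : {g : String // g ∈ fs}) ∈ fs.attach := Finset.mem_attach _ _
    have hge : k ⟨f, hf⟩ ≤ ∑ g ∈ fs.attach, k g :=
      Finset.single_le_sum (fun _ _ => Nat.zero_le _) hfa
    have hn1 : 1 ≤ n := by omega
    have main : ∀ (side : Ty), MemN0 m' (vch ⟨f, hsub hf⟩) side →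
        Subty (Ty.obj c fs (fun g => if g.1 = f then side else ch g)) t →
        MemStep SM (Val.obj c gs vch) t := by
      intro side hb hSub
      set k1 : {g : String // g ∈ fs} → ℕ := fun g => if g.1 = f then m' else k g with hk1def
      have hm1 : MemB (n - 1) (Val.obj c gs vch)
          (Ty.obj c fs (fun g => if g.1 = f then side else ch g)) := by
        refine MemB.obj hsub ?_ k1 ?_ ?_
        · intro g h
          by_cases hg : g = f
          · subst hg
            simp only [if_pos rfl]
            exact memN0_memVal hb
          · simp only [if_neg hg]
            exact hmv g h
        · intro g h
          by_cases hg : g = f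
          · subst hg
            simp only [hk1def, if_pos rfl]
            exact hb
          · simp only [hk1def, if_neg hg]
            exact hk g h
        · have hlt : ∑ g ∈ fs.attach, k1 g < ∑ g ∈ fs.attach, k g := by
            apply Finset.sum_lt_sum
            · intro i _
              by_cases hi : i.1 = f
              · have : i = ⟨f, hf⟩ := Subtype.ext hi
                subst this
                simp only [hk1def, if_pos rfl, hkeq]
                omega
              · simp only [hk1def, if_neg hi]
                exact le_rfl
            · refine ⟨⟨f, hf⟩, hfa, ?_⟩
              simp only [hk1def, if_pos rfl, hkeq]
              omega
          omega
      obtain ⟨m1, hS1⟩ := subN_of (sub_unfold hSub)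
      exact IH (n - 1) (by omega) hS1 hm1
    cases hc with
    | inl hb => exact main s1 hb h1
    | inr hb => exact main s2 hb h2

/-- Soundness of subtyping: if `τ1 ≤ τ2` then `⟦τ1⟧ ⊆ ⟦τ2⟧`. -/
theorem subtyping_sound (t1 t2 : Ty) (h : Subty t1 t2) :
    ∀ v : Val, MemVal v t1 → MemVal v t2 := by
  intro v hv
  refine ⟨SM, ?_, t1, hv, h⟩
  rintro w u ⟨x, hwx, hxu⟩
  obtain ⟨nB, hB⟩ := memB_of (mem_unfold hwx)
  obtain ⟨m, hS⟩ := subN_of (sub_unfold hxu)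
  exact key nB hS hB
end

section
/- For every type τ, if ↑τ holds, then ⟦τ⟧ ≠ ∅, i.e., there exists a value v with v ∈ τ. -/
/-- `NEStep` is monotone. -/
lemma NEStep.mono {R R' : Ty → Prop} (hRR' : ∀ s, R s → R' s) :
    ∀ {t : Ty}, NEStep R t → NEStep R' t := by
  intro t h
  induction h with
  | int => exact NEStep.int
  | unionL _ ih => exact NEStep.unionL ih
  | unionR _ ih => exact NEStep.unionR ih
  | obj hch => exact NEStep.obj (fun f hf => hRR' _ (hch f hf))

/-- Unfolding of the greatest fixed point `NotEmpty`. -/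
lemma NotEmpty.dest {t : Ty} (h : NotEmpty t) : NEStep NotEmpty t := by
  obtain ⟨R, hR, hRt⟩ := h
  exact NEStep.mono (fun s hs => ⟨R, hR, hs⟩) (hR t hRt)

/-- States of the corecursive witness construction. -/
def NEState : Type := {t : Ty // NotEmpty t}

/-- A "good head" for type `t`: building a value with this head and any
children respecting the states yields one valid layer of a membership
derivation. -/
def GoodHead (t : Ty) (x : ValP NEState) : Prop :=
  ∀ (g : NEState → Val) (R : Val → Ty → Prop),
    (∀ s : NEState, R (g s) s.1) →
    MemStep R (PFunctor.M.mk (ValP.map g x)) t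

lemma exists_goodHead (t : Ty) (h : NotEmpty t) : ∃ x, GoodHead t x := by
  have hd := h.dest
  clear h
  induction hd with
  | int =>
    refine ⟨⟨ValShape.int 0, Empty.elim⟩, ?_⟩
    intro g R _
    have : (ValP.map g ⟨ValShape.int 0, Empty.elim⟩ : ValP Val)
        = ⟨ValShape.int 0, Empty.elim⟩ := by
      show (⟨ValShape.int 0, g ∘ Empty.elim⟩ : ValP Val) = _
      congr 1
      funext e; exact e.elim
    rw [show PFunctor.M.mk (ValP.map g ⟨ValShape.int 0, Empty.elim⟩) = Val.int 0 from
      congrArg PFunctor.M.mk this]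
    exact MemStep.int 0
  | unionL _ ih =>
    obtain ⟨x, hx⟩ := ih
    exact ⟨x, fun g R hg => MemStep.unionL (hx g R hg)⟩
  | unionR _ ih =>
    obtain ⟨x, hx⟩ := ih
    exact ⟨x, fun g R hg => MemStep.unionR (hx g R hg)⟩
  | @obj c fs ch hch =>
    refine ⟨⟨ValShape.obj c fs, fun f => ⟨ch f, hch f.1 f.2⟩⟩, ?_⟩
    intro g R hg
    have : PFunctor.M.mk (ValP.map g ⟨ValShape.obj c fs, fun f => ⟨ch f, hch f.1 f.2⟩⟩)
        = Val.obj c fs (fun f => g ⟨ch f, hch f.1 f.2⟩) := rfl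
    rw [this]
    exact MemStep.obj (le_refl fs) (fun f hf => hg ⟨ch ⟨f, hf⟩, hch f hf⟩)

/-- The corecursive step function, chosen by classical choice. -/
noncomputable def NEStepFn : NEState → ValP NEState :=
  fun s => Classical.choose (exists_goodHead s.1 s.2)

lemma NEStepFn_good (s : NEState) : GoodHead s.1 (NEStepFn s) :=
  Classical.choose_spec (exists_goodHead s.1 s.2)

/-- The witness value for a non-empty type. -/
noncomputable def witVal : NEState → Val := PFunctor.M.corec NEStepFn

/-- Soundness of `↑τ`: if `↑τ` holds then `⟦τ⟧ ≠ ∅`. -/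
theorem notEmpty_sound (t : Ty) (h : NotEmpty t) : ∃ v : Val, MemVal v t := by
  refine ⟨witVal ⟨t, h⟩, ?_⟩
  refine ⟨fun v s => ∃ st : NEState, st.1 = s ∧ v = witVal st, ?_, ⟨⟨t, h⟩, rfl, rfl⟩⟩
  rintro w s ⟨st, rfl, rfl⟩
  have hw : witVal st = PFunctor.M.mk (ValP.map witVal (NEStepFn st)) := by
    conv_lhs => rw [← PFunctor.M.mk_dest (witVal st)]
    rw [witVal, PFunctor.M.dest_corec]
  rw [hw]
  exact NEStepFn_good st witVal _ (fun s' => ⟨s', rfl, rfl⟩)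
end

section
/- Object types distribute over union types up to subtyping equivalence: for every class name C, field name f, and types τ1, τ2, both obj C [f:τ1 ∨ τ2] ≤ (obj C [f:τ1]) ∨ (obj C [f:τ2]) and (obj C [f:τ1]) ∨ (obj C [f:τ2]) ≤ obj C [f:τ1 ∨ τ2] hold, i.e., obj C [f:τ1 ∨ τ2] ≅ (obj C [f:τ1]) ∨ (obj C [f:τ2]). -/
lemma subStep_mono_s11 {R S : Ty → Ty → Prop} (h : ∀ x y, R x y → S x y) :
    ∀ {x y}, SubStep R x y → SubStep S x y := by
  intro x y hs
  induction hs with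
  | int => exact .int
  | unionR1 _ ih => exact .unionR1 ih
  | unionR2 _ ih => exact .unionR2 ih
  | unionL h1 h2 => exact .unionL (h _ _ h1) (h _ _ h2)
  | obj hsub hch => exact .obj hsub (fun g hg => h _ _ (hch g hg))
  | distr hf heq h1 h2 => exact .distr hf heq (h _ _ h1) (h _ _ h2)

lemma subty_unfold {x y : Ty} (h : Subty x y) : SubStep Subty x y := by
  obtain ⟨R, hR, hxy⟩ := h
  exact subStep_mono_s11 (fun a b hab => ⟨R, hR, hab⟩) (hR _ _ hxy)

lemma subty_fold {x y : Ty} (h : SubStep Subty x y) : Subty x y :=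
  ⟨SubStep Subty, fun a b hab => subStep_mono_s11 (fun _ _ hpq => subty_unfold hpq) hab, h⟩

/-- Auxiliary relation for proving reflexivity. -/
def SubR0 : Ty → Ty → Prop := fun x y =>
  y = x ∨ ∃ a b, y = Ty.union a b ∧ (x = a ∨ x = b)

lemma subStep_R0_self (x : Ty) : SubStep SubR0 x x := by
  obtain ⟨⟨sh, ch⟩, hx⟩ : ∃ d, x = PFunctor.M.mk d :=
    ⟨PFunctor.M.dest x, (PFunctor.M.mk_dest x).symm⟩
  subst hx
  cases sh with
  | int =>
      have hch : ch = Empty.elim := funext (fun e => e.elim)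
      subst hch
      exact .int
  | obj c fs =>
      exact .obj (Finset.Subset.refl fs) (fun g hg => Or.inl rfl)
  | union =>
      have hch : PFunctor.M.mk ⟨TyShape.union, ch⟩ = Ty.union (ch true) (ch false) := by
        unfold Ty.union
        congr 1
        refine congrArg _ (funext fun b => ?_)
        cases b <;> rfl
      rw [hch]
      exact .unionL (Or.inr ⟨_, _, rfl, Or.inl rfl⟩) (Or.inr ⟨_, _, rfl, Or.inr rfl⟩)

lemma subty_refl (x : Ty) : Subty x x := by
  refine ⟨SubR0, ?_, Or.inl rfl⟩
  rintro a b hab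
  obtain (rfl | ⟨p, q, rfl, (rfl | rfl)⟩) := hab
  · exact subStep_R0_self _
  · exact .unionR1 (subStep_R0_self _)
  · exact .unionR2 (subStep_R0_self _)

/-- Object types distribute over union types up to subtyping equivalence:
`obj C [f:τ1 ∨ τ2] ≅ (obj C [f:τ1]) ∨ (obj C [f:τ2])`. -/
theorem obj_distributes_over_union (c f : String) (t1 t2 : Ty) :
    Subty (Ty.obj1 c f (Ty.union t1 t2)) (Ty.union (Ty.obj1 c f t1) (Ty.obj1 c f t2)) ∧
    Subty (Ty.union (Ty.obj1 c f t1) (Ty.obj1 c f t2)) (Ty.obj1 c f (Ty.union t1 t2)) := by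
  have key : ∀ (s : Ty) (ch : {g : String // g ∈ ({f} : Finset String)} → Ty),
      (fun g : {g : String // g ∈ ({f} : Finset String)} =>
        if g.1 = f then s else ch g) = fun _ => s := by
    intro s ch
    funext g
    simp [Finset.mem_singleton.mp g.2]
  constructor
  · apply subty_fold
    refine SubStep.distr (c := c) (fs := {f}) (ch := fun _ => Ty.union t1 t2)
      (f := f) (Finset.mem_singleton_self f) rfl ?_ ?_
    · rw [key]
      exact subty_fold (.unionR1 (subty_unfold (subty_refl (Ty.obj1 c f t1))))
    · rw [key]
      exact subty_fold (.unionR2 (subty_unfold (subty_refl (Ty.obj1 c f t2))))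
  · apply subty_fold
    refine SubStep.unionL ?_ ?_
    · exact subty_fold (.obj (Finset.Subset.refl _)
        (fun g hg => subty_fold (.unionR1 (subty_unfold (subty_refl t1)))))
    · exact subty_fold (.obj (Finset.Subset.refl _)
        (fun g hg => subty_fold (.unionR2 (subty_unfold (subty_refl t2)))))
end

section
/- For every type σ, let τ be the regular type satisfying the equation τ = σ ∨ τ. Then both τ ≤ σ and σ ≤ τ hold, i.e., τ and σ are equivalent with respect to subtyping. -/
/-- Auxiliary: `y` contains `x` as a union-right-descendant. -/
inductive UR : Ty → Ty → Prop where
  | refl (x : Ty) : UR x x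
  | left {x y1 y2 : Ty} : UR x y1 → UR x (Ty.union y1 y2)
  | right {x y1 y2 : Ty} : UR x y2 → UR x (Ty.union y1 y2)

theorem SubStep.mono {R S : Ty → Ty → Prop} (h : ∀ x y, R x y → S x y) :
    ∀ {x y : Ty}, SubStep R x y → SubStep S x y := by
  intro x y hs
  induction hs with
  | int => exact .int
  | unionR1 _ ih => exact .unionR1 ih
  | unionR2 _ ih => exact .unionR2 ih
  | unionL h1 h2 => exact .unionL (h _ _ h1) (h _ _ h2)
  | obj hsub hch => exact .obj hsub (fun f hf => h _ _ (hch f hf))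
  | distr hf he h1 h2 => exact .distr hf he (h _ _ h1) (h _ _ h2)

theorem substep_refl (x : Ty) : SubStep UR x x := by
  refine PFunctor.M.casesOn' (r := fun x => SubStep UR x x) x ?_
  intro a f
  cases a with
  | int =>
    have hf : f = Empty.elim := funext fun e => e.elim
    subst hf
    exact .int
  | obj c fs =>
    exact .obj (le_refl fs) (fun g hg => UR.refl _)
  | union =>
    have : PFunctor.M.mk (F := TyP) ⟨TyShape.union, f⟩
        = Ty.union (f true) (f false) := by
      unfold Ty.union
      congr 1
      refine congrArg _ (funext fun b => ?_)
      cases b <;> rfl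
    rw [this]
    exact .unionL (UR.left (UR.refl _)) (UR.right (UR.refl _))

theorem UR.substep : ∀ {x y : Ty}, UR x y → SubStep UR x y := by
  intro x y h
  induction h with
  | left _ ih => exact .unionR1 ih
  | right _ ih => exact .unionR2 ih
  | refl => exact substep_refl _

/-- For every type `σ`, if `τ` is the regular type with `τ = σ ∨ τ`, then
`τ ≤ σ` and `σ ≤ τ`, i.e. `τ` and `σ` are equivalent w.r.t. subtyping. -/
theorem union_self_absorb (σ t : Ty) (ht : t = Ty.union σ t) :
    Subty t σ ∧ Subty σ t := by
  set R : Ty → Ty → Prop := fun x y => (x = t ∧ y = σ) ∨ UR x y with hR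
  have hvalid : ∀ x y, R x y → SubStep R x y := by
    rintro x y (⟨rfl, rfl⟩ | h)
    · rw [ht]
      exact .unionL (Or.inr (UR.refl _)) (Or.inl ⟨rfl, rfl⟩)
    · exact SubStep.mono (fun a b hab => Or.inr hab) h.substep
  constructor
  · exact ⟨R, hvalid, Or.inl ⟨rfl, rfl⟩⟩
  · refine ⟨R, hvalid, Or.inr ?_⟩
    rw [ht]
    exact UR.left (UR.refl σ)
end
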